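/- arXiv:0809.3653 — 2 statements merged into one kernel-verified Lean document; each statement's English description precedes it below -/
import Mathlib

section
/- For every fixed substitution probability q with 0 < q < 1/8, the sequence P_α(n,q) converges as n → ∞ to the limit (1/2)·(1 − 2q/(1−2q) + √((1−8q)(1−4q))/(1−2q)²). -/
/-!
Model: rooted binary phylogenetic trees whose edges carry substitution
probabilities, evolving binary characters (states `true` = α, `false` = β)
under the two-state symmetric (Neyman) model, and Fitch's maximum parsimony
algorithm.
-/

/-- A rooted binary tree; an internal node records the substitution
probabilities on the edges to its two children. -/
inductive PTree where
  | leaf : PTree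
  | node (p₁ p₂ : ℝ) (t₁ t₂ : PTree) : PTree

/-- The type of binary characters on a tree: an assignment of a state
(`true` = α, `false` = β) to each leaf. -/
def PTree.Char : PTree → Type
  | .leaf => Bool
  | .node _ _ t₁ t₂ => t₁.Char × t₂.Char

instance PTree.Char.instFintype : (t : PTree) → Fintype t.Char
  | .leaf => inferInstanceAs (Fintype Bool)
  | .node _ _ t₁ t₂ =>
      letI := PTree.Char.instFintype t₁
      letI := PTree.Char.instFintype t₂
      inferInstanceAs (Fintype (_ × _))

instance PTree.Char.instDecidableEq : (t : PTree) → DecidableEq t.Char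
  | .leaf => inferInstanceAs (DecidableEq Bool)
  | .node _ _ t₁ t₂ =>
      letI := PTree.Char.instDecidableEq t₁
      letI := PTree.Char.instDecidableEq t₂
      inferInstanceAs (DecidableEq (_ × _))

/-- Single-edge transition probability of the two-state symmetric model:
conditional on the parent being in state `s`, the child is in state `s'`
with probability `1 - p` if `s' = s` and `p` otherwise. -/
def transProb (p : ℝ) (s s' : Bool) : ℝ := if s' = s then 1 - p else p

/-- `t.charProb s c` is the probability that the character `c` is generated
at the leaves of `t` conditional on the root of `t` being in state `s`
(substitutions happen independently across edges). -/
def PTree.charProb : (t : PTree) → Bool → t.Char → ℝ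
  | .leaf, s, c => if (show Bool from c) = s then 1 else 0
  | .node p₁ p₂ t₁ t₂, s, c =>
      (∑ s₁ : Bool, transProb p₁ s s₁ * t₁.charProb s₁ c.1) *
      (∑ s₂ : Bool, transProb p₂ s s₂ * t₂.charProb s₂ c.2)

/-- The state set assigned to the root by Fitch's maximum parsimony
algorithm: a leaf in state `s` gets `{s}`; an internal node gets the
intersection of the children's state sets if nonempty, else their union. -/
def PTree.fitch : (t : PTree) → t.Char → Finset Bool
  | .leaf, c => {c}
  | .node _ _ t₁ t₂, c =>
      if (t₁.fitch c.1 ∩ t₂.fitch c.2).Nonempty then t₁.fitch c.1 ∩ t₂.fitch c.2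
      else t₁.fitch c.1 ∪ t₂.fitch c.2

/-- `P_α`: probability, conditional on the root being in state α, that MP
returns the state set `{α}`. -/
noncomputable def PTree.probAlpha (t : PTree) : ℝ :=
  ∑ c : t.Char, if t.fitch c = {true} then t.charProb true c else 0

/-- `P_β`: probability, conditional on the root being in state α, that MP
returns the state set `{β}`. -/
noncomputable def PTree.probBeta (t : PTree) : ℝ :=
  ∑ c : t.Char, if t.fitch c = {false} then t.charProb true c else 0

/-- `P_{αβ}`: probability, conditional on the root being in state α, that MP
returns the state set `{α, β}`. -/
noncomputable def PTree.probBoth (t : PTree) : ℝ :=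
  ∑ c : t.Char, if t.fitch c = ({true, false} : Finset Bool) then t.charProb true c else 0

/-- The reconstruction accuracy `RA = UA + AA/2` of maximum parsimony on all
leaves of `t`, the conditioning root state being the root of `t` itself. -/
noncomputable def PTree.RA (t : PTree) : ℝ := t.probAlpha + t.probBoth / 2

/-- Probability of the character `c` on `t` conditional on the state `s` of an
ancestor vertex joined to the root of `t` by an edge of substitution
probability `p`. -/
noncomputable def PTree.charProbVia (t : PTree) (p : ℝ) (s : Bool) (c : t.Char) : ℝ :=
  ∑ s' : Bool, transProb p s s' * t.charProb s' c

/-- Reconstruction accuracy of MP applied to the subtree `t` (rooted at `y`),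
where the ancestral state being estimated is that of a vertex `ρ` joined to
`y` by an edge of substitution probability `p`:
`RA = P(MP = {α} | ρ = α) + (1/2)·P(MP = {α,β} | ρ = α)`. -/
noncomputable def PTree.RAVia (t : PTree) (p : ℝ) : ℝ :=
  (∑ c : t.Char, if t.fitch c = {true} then t.charProbVia p true c else 0) +
  (∑ c : t.Char, if t.fitch c = ({true, false} : Finset Bool) then t.charProbVia p true c else 0) / 2

/-- All edge substitution probabilities lie in `[0, 1/2]`. -/
def PTree.valid : PTree → Prop
  | .leaf => True
  | .node p₁ p₂ t₁ t₂ => 0 ≤ p₁ ∧ p₁ ≤ 1/2 ∧ 0 ≤ p₂ ∧ p₂ ≤ 1/2 ∧ t₁.valid ∧ t₂.valid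

/-- The list of net substitution probabilities from the root to each leaf
(obtained by chaining the single-edge substitution probabilities). -/
def PTree.leafFlipProbs : PTree → List ℝ
  | .leaf => [0]
  | .node p₁ p₂ t₁ t₂ =>
      (t₁.leafFlipProbs.map fun r => (1 - p₁) * r + p₁ * (1 - r)) ++
      (t₂.leafFlipProbs.map fun r => (1 - p₂) * r + p₂ * (1 - r))

/-- The balanced binary tree of depth `n` with substitution probability `q`
on every edge. -/
def balanced (q : ℝ) : ℕ → PTree
  | 0 => .leaf
  | n + 1 => .node q q (balanced q n) (balanced q n)

/-- `P_α(n,q)` for the balanced tree of depth `n`. -/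
noncomputable def Palpha (n : ℕ) (q : ℝ) : ℝ := (balanced q n).probAlpha

/-- `P_β(n,q)` for the balanced tree of depth `n`. -/
noncomputable def Pbeta (n : ℕ) (q : ℝ) : ℝ := (balanced q n).probBeta

/-- `P_{αβ}(n,q)` for the balanced tree of depth `n`. -/
noncomputable def Palphabeta (n : ℕ) (q : ℝ) : ℝ := (balanced q n).probBoth


namespace StmtAux
open Finset

def fcomb (A B : Finset Bool) : Finset Bool :=
  if (A ∩ B).Nonempty then A ∩ B else A ∪ B

lemma fitch_node (p₁ p₂ : ℝ) (t₁ t₂ : PTree) (c : (PTree.node p₁ p₂ t₁ t₂).Char) :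
    (PTree.node p₁ p₂ t₁ t₂).fitch c = fcomb (t₁.fitch c.1) (t₂.fitch c.2) := rfl

lemma fitch_nonempty : (t : PTree) → (c : t.Char) → (t.fitch c).Nonempty
  | .leaf, c => ⟨c, by simp [PTree.fitch]; exact Finset.mem_singleton_self (α := Bool) c⟩
  | .node p₁ p₂ t₁ t₂, c => by
      rw [fitch_node]
      unfold fcomb
      split
      · assumption
      · exact (fitch_nonempty t₁ c.1).mono Finset.subset_union_left

noncomputable def W (t : PTree) (s : Bool) (S : Finset Bool) : ℝ :=
  ∑ c : t.Char, if t.fitch c = S then t.charProb s c else 0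

lemma W_empty (t : PTree) (s : Bool) : W t s ∅ = 0 := by
  unfold W
  apply Finset.sum_eq_zero
  intro c _
  rw [if_neg]
  intro h
  exact (fitch_nonempty t c).ne_empty h

noncomputable def F (t : PTree) (p : ℝ) (s : Bool) (c : t.Char) : ℝ :=
  (1 - p) * t.charProb s c + p * t.charProb (!s) c

lemma sum_trans (t : PTree) (p : ℝ) (s : Bool) (c : t.Char) :
    (∑ s' : Bool, transProb p s s' * t.charProb s' c) = F t p s c := by
  cases s <;> (simp [Fintype.sum_bool, transProb, F]; try ring)

noncomputable def V (t : PTree) (p : ℝ) (s : Bool) (S : Finset Bool) : ℝ :=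
  (1 - p) * W t s S + p * W t (!s) S

lemma V_eq_sum (t : PTree) (p : ℝ) (s : Bool) (S : Finset Bool) :
    V t p s S = ∑ c : t.Char, if t.fitch c = S then F t p s c else 0 := by
  unfold V W F
  rw [Finset.mul_sum, Finset.mul_sum, ← Finset.sum_add_distrib]
  congr 1
  ext c
  split <;> simp

lemma V_empty (t : PTree) (p : ℝ) (s : Bool) : V t p s ∅ = 0 := by
  simp [V, W_empty]

lemma sum_finsetBool (f : Finset Bool → ℝ) :
    ∑ A : Finset Bool, f A = f ∅ + f {true} + f {false} + f {true, false} := by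
  rw [show (Finset.univ : Finset (Finset Bool)) =
      {∅, {true}, {false}, {true, false}} from by decide]
  rw [Finset.sum_insert (by decide), Finset.sum_insert (by decide),
    Finset.sum_insert (by decide), Finset.sum_singleton]
  ring

lemma prodsum (p₁ p₂ : ℝ) (t₁ t₂ : PTree) (g : t₁.Char → t₂.Char → ℝ) :
    ∑ c : (PTree.node p₁ p₂ t₁ t₂).Char, g c.1 c.2
      = ∑ c₁ : t₁.Char, ∑ c₂ : t₂.Char, g c₁ c₂ := by
  exact Fintype.sum_prod_type (α₁ := t₁.Char) (α₂ := t₂.Char)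
    (f := fun x => g x.1 x.2)

lemma W_node (p₁ p₂ : ℝ) (t₁ t₂ : PTree) (s : Bool) (S : Finset Bool) :
    W (.node p₁ p₂ t₁ t₂) s S =
      ∑ A : Finset Bool, ∑ B : Finset Bool,
        if fcomb A B = S then V t₁ p₁ s A * V t₂ p₂ s B else 0 := by
  classical
  have L1 : W (.node p₁ p₂ t₁ t₂) s S =
      ∑ c₁ : t₁.Char, ∑ c₂ : t₂.Char,
        (if fcomb (t₁.fitch c₁) (t₂.fitch c₂) = S
          then F t₁ p₁ s c₁ * F t₂ p₂ s c₂ else 0) := by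
    unfold W
    rw [show (∑ c : (PTree.node p₁ p₂ t₁ t₂).Char,
        if (PTree.node p₁ p₂ t₁ t₂).fitch c = S
          then (PTree.node p₁ p₂ t₁ t₂).charProb s c else 0)
      = ∑ c : (PTree.node p₁ p₂ t₁ t₂).Char,
        (if fcomb (t₁.fitch c.1) (t₂.fitch c.2) = S
          then F t₁ p₁ s c.1 * F t₂ p₂ s c.2 else 0) from ?_]
    · exact prodsum p₁ p₂ t₁ t₂
        (fun c₁ c₂ => if fcomb (t₁.fitch c₁) (t₂.fitch c₂) = S
          then F t₁ p₁ s c₁ * F t₂ p₂ s c₂ else 0)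
    · apply Finset.sum_congr rfl
      intro c _
      have hc : (PTree.node p₁ p₂ t₁ t₂).charProb s c
          = F t₁ p₁ s c.1 * F t₂ p₂ s c.2 := by
        show (∑ s₁ : Bool, transProb p₁ s s₁ * t₁.charProb s₁ c.1) *
             (∑ s₂ : Bool, transProb p₂ s s₂ * t₂.charProb s₂ c.2) = _
        rw [sum_trans, sum_trans]
      rw [fitch_node, hc]
  -- collapse lemma per (c₁, c₂)
  have key : ∀ (c₁ : t₁.Char) (c₂ : t₂.Char),
      (if fcomb (t₁.fitch c₁) (t₂.fitch c₂) = S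
        then F t₁ p₁ s c₁ * F t₂ p₂ s c₂ else 0)
      = ∑ A : Finset Bool, ∑ B : Finset Bool,
          (if t₁.fitch c₁ = A then F t₁ p₁ s c₁ else 0) *
          (if t₂.fitch c₂ = B then F t₂ p₂ s c₂ else 0) *
          (if fcomb A B = S then 1 else 0) := by
    intro c₁ c₂
    have h1 : ∀ A : Finset Bool,
        (∑ B : Finset Bool,
          (if t₁.fitch c₁ = A then F t₁ p₁ s c₁ else 0) *
          (if t₂.fitch c₂ = B then F t₂ p₂ s c₂ else 0) *
          (if fcomb A B = S then 1 else 0))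
        = if t₁.fitch c₁ = A then
            (∑ B : Finset Bool, if t₂.fitch c₂ = B then
              F t₁ p₁ s c₁ * F t₂ p₂ s c₂ * (if fcomb A B = S then 1 else 0)
              else 0)
          else 0 := by
      intro A
      split
      · apply Finset.sum_congr rfl
        intro B _
        split
        · ring
        · simp
      · simp
    rw [Finset.sum_congr rfl (fun A _ => h1 A), Finset.sum_ite_eq]
    simp only [Finset.mem_univ, if_true, Finset.sum_ite_eq]
    split <;> simp [mul_comm, mul_assoc]
  rw [L1]
  rw [Finset.sum_congr rfl (fun c₁ _ => Finset.sum_congr rfl (fun c₂ _ => key c₁ c₂))]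
  -- now swap the quadruple sums
  rw [show (∑ c₁ : t₁.Char, ∑ c₂ : t₂.Char, ∑ A : Finset Bool, ∑ B : Finset Bool,
      (if t₁.fitch c₁ = A then F t₁ p₁ s c₁ else 0) *
      (if t₂.fitch c₂ = B then F t₂ p₂ s c₂ else 0) *
      (if fcomb A B = S then 1 else 0))
    = ∑ A : Finset Bool, ∑ B : Finset Bool, ∑ c₁ : t₁.Char, ∑ c₂ : t₂.Char,
      (if t₁.fitch c₁ = A then F t₁ p₁ s c₁ else 0) *
      (if t₂.fitch c₂ = B then F t₂ p₂ s c₂ else 0) *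
      (if fcomb A B = S then 1 else 0) from ?_]
  · apply Finset.sum_congr rfl
    intro A _
    apply Finset.sum_congr rfl
    intro B _
    rw [V_eq_sum, V_eq_sum]
    split
    · rw [Finset.sum_mul_sum]
      apply Finset.sum_congr rfl; intro c₁ _
      apply Finset.sum_congr rfl; intro c₂ _
      simp only [if_pos ‹_›, mul_one]
    · apply Finset.sum_eq_zero
      intro c₁ _
      apply Finset.sum_eq_zero
      intro c₂ _
      simp only [if_neg ‹_›, mul_zero]
  · -- pure exchange of sums
    have sc : ∀ {α β : Type} [Fintype α] [Fintype β] (g : α → β → ℝ),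
        ∑ a : α, ∑ b : β, g a b = ∑ b : β, ∑ a : α, g a b :=
      fun g => Finset.sum_comm
    calc (∑ c₁ : t₁.Char, ∑ c₂ : t₂.Char, ∑ A : Finset Bool, ∑ B : Finset Bool,
          (if t₁.fitch c₁ = A then F t₁ p₁ s c₁ else 0) *
          (if t₂.fitch c₂ = B then F t₂ p₂ s c₂ else 0) *
          (if fcomb A B = S then 1 else 0))
        = ∑ c₁ : t₁.Char, ∑ A : Finset Bool, ∑ c₂ : t₂.Char, ∑ B : Finset Bool,
          (if t₁.fitch c₁ = A then F t₁ p₁ s c₁ else 0) *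
          (if t₂.fitch c₂ = B then F t₂ p₂ s c₂ else 0) *
          (if fcomb A B = S then 1 else 0) :=
          Finset.sum_congr rfl (fun c₁ _ => sc _)
      _ = ∑ A : Finset Bool, ∑ c₁ : t₁.Char, ∑ c₂ : t₂.Char, ∑ B : Finset Bool,
          (if t₁.fitch c₁ = A then F t₁ p₁ s c₁ else 0) *
          (if t₂.fitch c₂ = B then F t₂ p₂ s c₂ else 0) *
          (if fcomb A B = S then 1 else 0) := sc _
      _ = ∑ A : Finset Bool, ∑ c₁ : t₁.Char, ∑ B : Finset Bool, ∑ c₂ : t₂.Char,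
          (if t₁.fitch c₁ = A then F t₁ p₁ s c₁ else 0) *
          (if t₂.fitch c₂ = B then F t₂ p₂ s c₂ else 0) *
          (if fcomb A B = S then 1 else 0) :=
          Finset.sum_congr rfl (fun A _ => Finset.sum_congr rfl (fun c₁ _ => sc _))
      _ = ∑ A : Finset Bool, ∑ B : Finset Bool, ∑ c₁ : t₁.Char, ∑ c₂ : t₂.Char,
          (if t₁.fitch c₁ = A then F t₁ p₁ s c₁ else 0) *
          (if t₂.fitch c₂ = B then F t₂ p₂ s c₂ else 0) *
          (if fcomb A B = S then 1 else 0) :=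
          Finset.sum_congr rfl (fun A _ => sc _)


lemma balanced_succ (q : ℝ) (n : ℕ) :
    balanced q (n+1) = .node q q (balanced q n) (balanced q n) := rfl

lemma W_succ (q : ℝ) (n : ℕ) (s : Bool) (S : Finset Bool) :
    W (balanced q (n+1)) s S =
      ∑ A : Finset Bool, ∑ B : Finset Bool,
        if fcomb A B = S then
          V (balanced q n) q s A * V (balanced q n) q s B else 0 := by
  rw [balanced_succ, W_node]

lemma W_succ_t (q : ℝ) (n : ℕ) (s : Bool) :
    W (balanced q (n+1)) s {true} =
      V (balanced q n) q s {true} * V (balanced q n) q s {true}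
      + 2 * V (balanced q n) q s {true} * V (balanced q n) q s {true, false} := by
  rw [W_succ]
  simp only [sum_finsetBool, V_empty]
  simp +decide [fcomb]
  ring


lemma W_succ_f (q : ℝ) (n : ℕ) (s : Bool) :
    W (balanced q (n+1)) s {false} =
      V (balanced q n) q s {false} * V (balanced q n) q s {false}
      + 2 * V (balanced q n) q s {false} * V (balanced q n) q s {true, false} := by
  rw [W_succ]
  simp only [sum_finsetBool, V_empty]
  simp +decide [fcomb]
  ring

lemma W_succ_tf (q : ℝ) (n : ℕ) (s : Bool) :
    W (balanced q (n+1)) s {true, false} =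
      V (balanced q n) q s {true, false} * V (balanced q n) q s {true, false}
      + 2 * V (balanced q n) q s {true} * V (balanced q n) q s {false} := by
  rw [W_succ]
  simp only [sum_finsetBool, V_empty]
  simp +decide [fcomb]
  ring

lemma W_leaf (s : Bool) (S : Finset Bool) :
    W PTree.leaf s S = if S = {s} then 1 else 0 := by
  unfold W
  show (∑ c : Bool, _) = _
  rw [Fintype.sum_bool]
  cases s <;> simp [PTree.fitch, PTree.charProb, eq_comm] <;> rfl

lemma W_base_tt (q : ℝ) : W (balanced q 0) true {true} = 1 := by
  show W PTree.leaf true {true} = 1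
  rw [W_leaf]; simp

lemma W_base_tf (q : ℝ) : W (balanced q 0) true {false} = 0 := by
  show W PTree.leaf true {false} = 0
  rw [W_leaf]; simp +decide

lemma W_base_ttf (q : ℝ) : W (balanced q 0) true {true, false} = 0 := by
  show W PTree.leaf true {true, false} = 0
  rw [W_leaf]; simp +decide

lemma W_base_ft (q : ℝ) : W (balanced q 0) false {true} = 0 := by
  show W PTree.leaf false {true} = 0
  rw [W_leaf]; simp +decide

lemma W_base_ff (q : ℝ) : W (balanced q 0) false {false} = 1 := by
  show W PTree.leaf false {false} = 1
  rw [W_leaf]; simp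

lemma W_base_ftf (q : ℝ) : W (balanced q 0) false {true, false} = 0 := by
  show W PTree.leaf false {true, false} = 0
  rw [W_leaf]; simp +decide

/-- The symmetry: swapping the root state swaps the roles of {true} and {false}. -/
lemma W_sym (q : ℝ) : ∀ n : ℕ,
    W (balanced q n) false {true} = W (balanced q n) true {false} ∧
    W (balanced q n) false {false} = W (balanced q n) true {true} ∧
    W (balanced q n) false {true, false} = W (balanced q n) true {true, false}
  | 0 => by
      rw [W_base_tt, W_base_tf, W_base_ttf, W_base_ft, W_base_ff, W_base_ftf]
      exact ⟨rfl, rfl, rfl⟩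
  | n + 1 => by
      obtain ⟨h1, h2, h3⟩ := W_sym q n
      have vt : V (balanced q n) q false {true} = V (balanced q n) q true {false} := by
        simp only [V, Bool.not_true, Bool.not_false, h1, h2]
      have vf : V (balanced q n) q false {false} = V (balanced q n) q true {true} := by
        simp only [V, Bool.not_true, Bool.not_false, h1, h2]
      have vtf : V (balanced q n) q false {true, false}
          = V (balanced q n) q true {true, false} := by
        simp only [V, Bool.not_true, Bool.not_false, h3]
      refine ⟨?_, ?_, ?_⟩
      · rw [W_succ_t, W_succ_f, vt, vtf]
      · rw [W_succ_f, W_succ_t, vf, vtf]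
      · rw [W_succ_tf, W_succ_tf, vt, vf, vtf]
        ring

noncomputable def aseq (q : ℝ) (n : ℕ) : ℝ := W (balanced q n) true {true}
noncomputable def bseq (q : ℝ) (n : ℕ) : ℝ := W (balanced q n) true {false}
noncomputable def cseq (q : ℝ) (n : ℕ) : ℝ := W (balanced q n) true {true, false}

lemma Palpha_eq (q : ℝ) (n : ℕ) : Palpha n q = aseq q n := rfl

lemma V_t (q : ℝ) (n : ℕ) :
    V (balanced q n) q true {true} = (1-q) * aseq q n + q * bseq q n := by
  simp only [V, Bool.not_true, aseq, bseq, (W_sym q n).1]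

lemma V_f (q : ℝ) (n : ℕ) :
    V (balanced q n) q true {false} = (1-q) * bseq q n + q * aseq q n := by
  simp only [V, Bool.not_true, aseq, bseq, (W_sym q n).2.1]

lemma V_tf (q : ℝ) (n : ℕ) :
    V (balanced q n) q true {true, false} = cseq q n := by
  simp only [V, Bool.not_true, cseq, (W_sym q n).2.2]
  ring

lemma rec_a (q : ℝ) (n : ℕ) :
    aseq q (n+1) = ((1-q) * aseq q n + q * bseq q n)^2
      + 2 * ((1-q) * aseq q n + q * bseq q n) * cseq q n := by
  show W (balanced q (n+1)) true {true} = _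
  rw [W_succ_t, V_t, V_tf]; ring

lemma rec_b (q : ℝ) (n : ℕ) :
    bseq q (n+1) = ((1-q) * bseq q n + q * aseq q n)^2
      + 2 * ((1-q) * bseq q n + q * aseq q n) * cseq q n := by
  show W (balanced q (n+1)) true {false} = _
  rw [W_succ_f, V_f, V_tf]; ring

lemma rec_c (q : ℝ) (n : ℕ) :
    cseq q (n+1) = (cseq q n)^2
      + 2 * ((1-q) * aseq q n + q * bseq q n) * ((1-q) * bseq q n + q * aseq q n) := by
  show W (balanced q (n+1)) true {true, false} = _
  rw [W_succ_tf, V_t, V_f, V_tf]; ring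

lemma base_a (q : ℝ) : aseq q 0 = 1 := W_base_tt q
lemma base_b (q : ℝ) : bseq q 0 = 0 := W_base_tf q
lemma base_c (q : ℝ) : cseq q 0 = 0 := W_base_ttf q

lemma sum_one (q : ℝ) : ∀ n : ℕ, aseq q n + bseq q n + cseq q n = 1
  | 0 => by rw [base_a, base_b, base_c]; ring
  | n + 1 => by
      have h := sum_one q n
      rw [rec_a, rec_b, rec_c]
      nlinarith [h]


lemma E1 (c s : ℝ) (hc : 0 ≤ c) (hcs : c ≤ s) (hs : s ≤ 1/3) :
    (1+s)^2 * ((1-s)*(1-3*s)) ≤ (1+c)^2 * (3*c^2-2*c+1-2*s) := by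
  have hu : (0:ℝ) ≤ s - c := by linarith
  have hz : (0:ℝ) ≤ 1 - 3*s := by linarith
  have hs0 : (0:ℝ) ≤ s := hc.trans hcs
  nlinarith [mul_nonneg (mul_nonneg (mul_nonneg hu hs0) (by linarith : (0:ℝ) ≤ 1+s)) hz,
    mul_nonneg (mul_nonneg (mul_nonneg hu hu) hs0) (by linarith : (0:ℝ) ≤ 1+s),
    mul_nonneg (mul_nonneg (mul_nonneg hu hu) hc) (by linarith : (0:ℝ) ≤ 4+12*s),
    pow_nonneg hu 4]

lemma E2 (c s : ℝ) (hc : 0 ≤ c) (hcs : c ≤ s) (hs : s ≤ 1/3) :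
    (1+s)^2 * (3*(3*c^2-2*c)^2 - 4*(3*c^2-2*c) + 4 - 8*s) ≤ 4*(1+c)^2 := by
  have hu : (0:ℝ) ≤ s - c := by linarith
  have hz : (0:ℝ) ≤ 1 - 3*s := by linarith
  have h0 : (0:ℝ) ≤ (s-c)^0 * c^3 * (1-3*s)^3 := mul_nonneg (mul_nonneg (pow_nonneg hu 0) (pow_nonneg hc 3)) (pow_nonneg hz 3)
  have h1 : (0:ℝ) ≤ (s-c)^0 * c^4 * (1-3*s)^2 := mul_nonneg (mul_nonneg (pow_nonneg hu 0) (pow_nonneg hc 4)) (pow_nonneg hz 2)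
  have h2 : (0:ℝ) ≤ (s-c)^0 * c^5 * (1-3*s)^1 := mul_nonneg (mul_nonneg (pow_nonneg hu 0) (pow_nonneg hc 5)) (pow_nonneg hz 1)
  have h3 : (0:ℝ) ≤ (s-c)^0 * c^6 * (1-3*s)^0 := mul_nonneg (mul_nonneg (pow_nonneg hu 0) (pow_nonneg hc 6)) (pow_nonneg hz 0)
  have h4 : (0:ℝ) ≤ (s-c)^1 * c^1 * (1-3*s)^4 := mul_nonneg (mul_nonneg (pow_nonneg hu 1) (pow_nonneg hc 1)) (pow_nonneg hz 4)
  have h5 : (0:ℝ) ≤ (s-c)^1 * c^2 * (1-3*s)^3 := mul_nonneg (mul_nonneg (pow_nonneg hu 1) (pow_nonneg hc 2)) (pow_nonneg hz 3)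
  have h6 : (0:ℝ) ≤ (s-c)^1 * c^3 * (1-3*s)^2 := mul_nonneg (mul_nonneg (pow_nonneg hu 1) (pow_nonneg hc 3)) (pow_nonneg hz 2)
  have h7 : (0:ℝ) ≤ (s-c)^1 * c^4 * (1-3*s)^1 := mul_nonneg (mul_nonneg (pow_nonneg hu 1) (pow_nonneg hc 4)) (pow_nonneg hz 1)
  have h8 : (0:ℝ) ≤ (s-c)^1 * c^5 * (1-3*s)^0 := mul_nonneg (mul_nonneg (pow_nonneg hu 1) (pow_nonneg hc 5)) (pow_nonneg hz 0)
  have h9 : (0:ℝ) ≤ (s-c)^2 * c^0 * (1-3*s)^4 := mul_nonneg (mul_nonneg (pow_nonneg hu 2) (pow_nonneg hc 0)) (pow_nonneg hz 4)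
  have h10 : (0:ℝ) ≤ (s-c)^2 * c^1 * (1-3*s)^3 := mul_nonneg (mul_nonneg (pow_nonneg hu 2) (pow_nonneg hc 1)) (pow_nonneg hz 3)
  have h11 : (0:ℝ) ≤ (s-c)^2 * c^2 * (1-3*s)^2 := mul_nonneg (mul_nonneg (pow_nonneg hu 2) (pow_nonneg hc 2)) (pow_nonneg hz 2)
  have h12 : (0:ℝ) ≤ (s-c)^2 * c^3 * (1-3*s)^1 := mul_nonneg (mul_nonneg (pow_nonneg hu 2) (pow_nonneg hc 3)) (pow_nonneg hz 1)
  have h13 : (0:ℝ) ≤ (s-c)^2 * c^4 * (1-3*s)^0 := mul_nonneg (mul_nonneg (pow_nonneg hu 2) (pow_nonneg hc 4)) (pow_nonneg hz 0)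
  have h14 : (0:ℝ) ≤ (s-c)^3 * c^0 * (1-3*s)^3 := mul_nonneg (mul_nonneg (pow_nonneg hu 3) (pow_nonneg hc 0)) (pow_nonneg hz 3)
  have h15 : (0:ℝ) ≤ (s-c)^3 * c^1 * (1-3*s)^2 := mul_nonneg (mul_nonneg (pow_nonneg hu 3) (pow_nonneg hc 1)) (pow_nonneg hz 2)
  have h16 : (0:ℝ) ≤ (s-c)^3 * c^2 * (1-3*s)^1 := mul_nonneg (mul_nonneg (pow_nonneg hu 3) (pow_nonneg hc 2)) (pow_nonneg hz 1)
  have h17 : (0:ℝ) ≤ (s-c)^3 * c^3 * (1-3*s)^0 := mul_nonneg (mul_nonneg (pow_nonneg hu 3) (pow_nonneg hc 3)) (pow_nonneg hz 0)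
  have h18 : (0:ℝ) ≤ (s-c)^4 * c^0 * (1-3*s)^2 := mul_nonneg (mul_nonneg (pow_nonneg hu 4) (pow_nonneg hc 0)) (pow_nonneg hz 2)
  have h19 : (0:ℝ) ≤ (s-c)^4 * c^1 * (1-3*s)^1 := mul_nonneg (mul_nonneg (pow_nonneg hu 4) (pow_nonneg hc 1)) (pow_nonneg hz 1)
  have h20 : (0:ℝ) ≤ (s-c)^4 * c^2 * (1-3*s)^0 := mul_nonneg (mul_nonneg (pow_nonneg hu 4) (pow_nonneg hc 2)) (pow_nonneg hz 0)
  have h21 : (0:ℝ) ≤ (s-c)^5 * c^0 * (1-3*s)^1 := mul_nonneg (mul_nonneg (pow_nonneg hu 5) (pow_nonneg hc 0)) (pow_nonneg hz 1)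
  have h22 : (0:ℝ) ≤ (s-c)^5 * c^1 * (1-3*s)^0 := mul_nonneg (mul_nonneg (pow_nonneg hu 5) (pow_nonneg hc 1)) (pow_nonneg hz 0)
  have h23 : (0:ℝ) ≤ (s-c)^6 * c^0 * (1-3*s)^0 := mul_nonneg (mul_nonneg (pow_nonneg hu 6) (pow_nonneg hc 0)) (pow_nonneg hz 0)
  linarith [h0, h1, h2, h3, h4, h5, h6, h7, h8, h9, h10, h11, h12, h13, h14, h15, h16, h17, h18, h19, h20, h21, h22, h23]

lemma interp (κ P C m m₁ : ℝ)
    (h₁ : 0 ≤ κ*m₁ - (3*(P - m₁/2)^2 - 2*(P - m₁/2) + C))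
    (h2 : 0 ≤ κ*1 - (3*(P - 1/2)^2 - 2*(P - 1/2) + C))
    (hm₁ : m₁ ≤ m) (hm : m ≤ 1) :
    0 ≤ κ*m - (3*(P - m/2)^2 - 2*(P - m/2) + C) := by
  rcases eq_or_lt_of_le (hm₁.trans hm) with h | h
  · have hm1 : m = 1 := le_antisymm hm (h ▸ hm₁)
    rw [hm1]; linarith [h2]
  · nlinarith [mul_nonneg (by linarith : (0:ℝ) ≤ 1 - m) h₁,
      mul_nonneg (by linarith : (0:ℝ) ≤ m - m₁) h2,
      mul_nonneg (mul_nonneg (by linarith : (0:ℝ) ≤ m - m₁) (by linarith : (0:ℝ) ≤ 1 - m)) (by linarith : (0:ℝ) ≤ 1 - m₁), h]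


lemma rec_d (q : ℝ) (n : ℕ) :
    aseq q (n+1) - bseq q (n+1)
      = (1-2*q) * (1 + cseq q n) * (aseq q n - bseq q n) := by
  linear_combination (rec_a q n) - (rec_b q n)
    + (1-2*q) * (aseq q n - bseq q n) * (sum_one q n)

lemma rec_c2 (q : ℝ) (n : ℕ) :
    cseq q (n+1) = (cseq q n)^2
      + ((1 - cseq q n)^2 - (1-2*q)^2*(aseq q n - bseq q n)^2)/2 := by
  linear_combination (rec_c q n)
    + ((aseq q n + bseq q n + 1 - cseq q n)/2) * (sum_one q n)

set_option maxHeartbeats 1000000 in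
lemma invariant (q : ℝ) (hq0 : 0 < q) (hq8 : q < 1/8) : ∀ n : ℕ,
    0 ≤ bseq q n ∧ bseq q n ≤ aseq q n ∧ 0 ≤ cseq q n ∧
    cseq q n ≤ 2*q/(1-2*q) ∧
    3*(cseq q n)^2 - 2*(cseq q n) + 1 - 2*(2*q/(1-2*q))
      ≤ (1-2*q)^2*(aseq q n - bseq q n)^2
  | 0 => by
      have hθ : (0:ℝ) < 1 - 2*q := by linarith
      have hs_eq : 2*q/(1-2*q) * (1-2*q) = 2*q := div_mul_cancel₀ _ (ne_of_gt hθ)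
      rw [base_a, base_b, base_c]
      refine ⟨le_refl 0, by norm_num, le_refl 0, by positivity, ?_⟩
      nlinarith [hs_eq, hθ, hq0, hq8, sq_nonneg q, mul_pos hθ hθ]
  | n + 1 => by
      obtain ⟨hb0, hba, hc0, hcs, hinv⟩ := invariant q hq0 hq8 n
      have hθ : (0:ℝ) < 1 - 2*q := by linarith
      have hq1 : q ≤ 1 := by linarith
      have hs0 : (0:ℝ) ≤ 2*q/(1-2*q) := by positivity
      have hs3 : 2*q/(1-2*q) ≤ 1/3 := by rw [div_le_iff₀ hθ]; linarith
      have hsc : (1-2*q) * (1 + 2*q/(1-2*q)) = 1 := by field_simp; ring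
      have hsc2 : (1-2*q)^2 * (1 + 2*q/(1-2*q))^2 = 1 := by
        rw [← mul_pow, hsc, one_pow]
      have ha0 : 0 ≤ aseq q n := hb0.trans hba
      have hsum := sum_one q n
      have ha1 : aseq q n ≤ 1 := by linarith
      have h1q : (0:ℝ) ≤ 1 - q := by linarith
      have hA : 0 ≤ (1-q) * aseq q n + q * bseq q n :=
        add_nonneg (mul_nonneg h1q ha0) (mul_nonneg hq0.le hb0)
      have hB : 0 ≤ (1-q) * bseq q n + q * aseq q n :=
        add_nonneg (mul_nonneg h1q hb0) (mul_nonneg hq0.le ha0)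
      have hd0 : 0 ≤ aseq q n - bseq q n := by linarith
      have hd1 : aseq q n - bseq q n ≤ 1 := by linarith
      refine ⟨?_, ?_, ?_, ?_, ?_⟩
      · rw [rec_b]; nlinarith [hB, hc0]
      · nlinarith [rec_d q n, hθ, hc0, hd0, mul_nonneg (mul_nonneg hθ.le (by linarith : (0:ℝ) ≤ 1 + cseq q n)) hd0]
      · rw [rec_c]; nlinarith [hA, hB, sq_nonneg (cseq q n)]
      · linarith [rec_c2 q n, hinv]
      · -- the main inequality, via interpolation
        set s : ℝ := 2*q/(1-2*q) with hs_def
        set c : ℝ := cseq q n with hc_def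
        have e1 := E1 c s hc0 hcs hs3
        have e2 := E2 c s hc0 hcs hs3
        set κ : ℝ := (1-2*q)^2*(1+c)^2 with hκ_def
        set P : ℝ := c^2 + (1-c)^2/2 with hP_def
        set m : ℝ := (1-2*q)^2*(aseq q n - bseq q n)^2 with hm_def
        have key : κ * (1+s)^2 = (1+c)^2 := by
          rw [hκ_def]; linear_combination ((1+c)^2) * hsc2
        have hsp : (0:ℝ) < (1+s)^2 := by positivity
        have h₁ : 0 ≤ κ*(3*c^2-2*c+1-2*s)
            - (3*(P - (3*c^2-2*c+1-2*s)/2)^2 - 2*(P - (3*c^2-2*c+1-2*s)/2) + (1-2*s)) := by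
          have h' : (1+s)^2 * ((1-s)*(1-3*s)) ≤ (1+s)^2 * (κ*(3*c^2-2*c+1-2*s)) := by
            calc (1+s)^2 * ((1-s)*(1-3*s)) ≤ (1+c)^2 * (3*c^2-2*c+1-2*s) := e1
            _ = (1+s)^2 * (κ*(3*c^2-2*c+1-2*s)) := by rw [← key]; ring
          have h'' := le_of_mul_le_mul_left h' hsp
          have hbr : 3*(P - (3*c^2-2*c+1-2*s)/2)^2 - 2*(P - (3*c^2-2*c+1-2*s)/2) + (1-2*s)
              = (1-s)*(1-3*s) := by rw [hP_def]; ring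
          rw [hbr]
          linarith [h'']
        have h2 : 0 ≤ κ*1 - (3*(P - 1/2)^2 - 2*(P - 1/2) + (1-2*s)) := by
          have h' : (1+s)^2 * (3*(3*c^2-2*c)^2 - 4*(3*c^2-2*c) + 4 - 8*s)
              ≤ (1+s)^2 * (4*κ) := by
            calc (1+s)^2 * (3*(3*c^2-2*c)^2 - 4*(3*c^2-2*c) + 4 - 8*s)
                ≤ 4*(1+c)^2 := e2
            _ = (1+s)^2 * (4*κ) := by rw [← key]; ring
          have h'' := le_of_mul_le_mul_left h' hsp
          have hbr2 : 3*(P - 1/2)^2 - 2*(P - 1/2) + (1-2*s)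
              = (3*(3*c^2-2*c)^2 - 4*(3*c^2-2*c) + 4 - 8*s)/4 := by rw [hP_def]; ring
          rw [hbr2]
          linarith [h'']
        have hmle : m ≤ 1 := by
          have h1' : (0:ℝ) ≤ 1 - (1-2*q)^2 := by nlinarith
          have h2' : (0:ℝ) ≤ 1 - (aseq q n - bseq q n)^2 := by nlinarith
          have h3' := mul_nonneg (sq_nonneg (1-2*q)) h2'
          rw [hm_def]; nlinarith [h1', h3']
        have hint := interp κ P (1-2*s) m (3*c^2-2*c+1-2*s) h₁ h2 hinv hmle
        have hc' : cseq q (n+1) = P - m/2 := by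
          rw [rec_c2 q n, hP_def, hm_def]; ring
        have hd' : (1-2*q)^2*(aseq q (n+1) - bseq q (n+1))^2 = κ * m := by
          rw [rec_d q n, hκ_def, hm_def]; ring
        rw [hc', hd']
        linarith [hint]


open Filter Topology

set_option maxHeartbeats 2000000 in
theorem stmt1_aux (q : ℝ) (hq0 : 0 < q) (hq1 : q < 1/8) :
    Filter.Tendsto (fun n : ℕ => Palpha n q) Filter.atTop
      (nhds ((1/2) * (1 - 2*q/(1-2*q) + Real.sqrt ((1-8*q)*(1-4*q)) / (1-2*q)^2))) := by
  have hθ : (0:ℝ) < 1 - 2*q := by linarith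
  set s : ℝ := 2*q/(1-2*q) with hs_def
  have hs0 : (0:ℝ) ≤ s := by positivity
  have hs3 : s ≤ 1/3 := by rw [hs_def, div_le_iff₀ hθ]; linarith
  have hsc : (1-2*q) * (1 + s) = 1 := by rw [hs_def]; field_simp; ring
  set d : ℕ → ℝ := fun n => aseq q n - bseq q n with hd_def
  have hI := invariant q hq0 hq1
  have hd0 : ∀ n, 0 ≤ d n := fun n => by
    have h := (hI n).2.1
    show (0:ℝ) ≤ aseq q n - bseq q n
    linarith
  -- the candidate limit of d
  set dlow : ℝ := Real.sqrt ((1-8*q)*(1-4*q)) / (1-2*q)^2 with hdlow_def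
  have hprod : (0:ℝ) < (1-8*q)*(1-4*q) := by nlinarith
  have hdlow0 : 0 < dlow := by
    rw [hdlow_def]; positivity
  have hdlow_sq : dlow^2 = (1-8*q)*(1-4*q)/(1-2*q)^4 := by
    rw [hdlow_def, div_pow, Real.sq_sqrt hprod.le]; ring
  -- lower bound for d
  have hlb : ∀ n, dlow ≤ d n := by
    intro n
    obtain ⟨hb0, hba, hc0, hcs, hinv⟩ := hI n
    rw [← hs_def] at hcs hinv
    have hl : (1-s)*(1-3*s) ≤ 3*(cseq q n)^2 - 2*(cseq q n) + 1 - 2*s := by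
      nlinarith [hcs, hc0, hs3]
    have hgs : (1-s)*(1-3*s)*(1-2*q)^2 = (1-4*q)*(1-8*q) := by
      rw [hs_def]; field_simp; ring
    have hsq : dlow^2 ≤ (d n)^2 := by
      show dlow^2 ≤ (aseq q n - bseq q n)^2
      rw [hdlow_sq]
      rw [div_le_iff₀ (by positivity)]
      have k1 := mul_le_mul_of_nonneg_right hl (sq_nonneg (1-2*q))
      have k2 := mul_le_mul_of_nonneg_right hinv (sq_nonneg (1-2*q))
      have : (0:ℝ) ≤ aseq q n - bseq q n := by linarith [(hI n).2.1]
      nlinarith [k1, k2, hgs]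
    calc dlow = Real.sqrt (dlow^2) := (Real.sqrt_sq hdlow0.le).symm
      _ ≤ Real.sqrt ((d n)^2) := Real.sqrt_le_sqrt hsq
      _ = d n := Real.sqrt_sq (hd0 n)
  -- d is antitone
  have hstep : ∀ n, d (n+1) = (1-2*q) * (1 + cseq q n) * d n := fun n => rec_d q n
  have hanti : Antitone d := by
    apply antitone_nat_of_succ_le
    intro n
    have hcs := (hI n).2.2.2.1
    have h1 : (1-2*q) * (1 + cseq q n) ≤ 1 := by
      calc (1-2*q) * (1 + cseq q n) ≤ (1-2*q) * (1 + s) :=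
        mul_le_mul_of_nonneg_left (by linarith) hθ.le
      _ = 1 := hsc
    rw [hstep n]
    nlinarith [hd0 n, h1, mul_le_mul_of_nonneg_right h1 (hd0 n)]
  -- convergence of d
  have hbdd : BddBelow (Set.range d) := ⟨0, by rintro x ⟨n, rfl⟩; exact hd0 n⟩
  set δ : ℝ := ⨅ n, d n with hδ_def
  have hd_tend : Tendsto d atTop (nhds δ) := tendsto_atTop_ciInf hanti hbdd
  have hδlb : dlow ≤ δ := le_ciInf hlb
  have hδ0 : 0 < δ := lt_of_lt_of_le hdlow0 hδlb
  -- convergence of c to s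
  have hc_eq : ∀ n, cseq q n = d (n+1) / ((1-2*q) * d n) - 1 := by
    intro n
    have hne : d n ≠ 0 := ne_of_gt (lt_of_lt_of_le hdlow0 (hlb n))
    rw [hstep n]
    field_simp
    ring
  have hd1_tend : Tendsto (fun n => d (n+1)) atTop (nhds δ) :=
    hd_tend.comp (tendsto_add_atTop_nat 1)
  have hden_tend : Tendsto (fun n => (1-2*q) * d n) atTop (nhds ((1-2*q) * δ)) :=
    tendsto_const_nhds.mul hd_tend
  have hdenne : (1-2*q) * δ ≠ 0 := mul_ne_zero hθ.ne' hδ0.ne'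
  have hc_tend : Tendsto (fun n => cseq q n) atTop (nhds s) := by
    have h1 : Tendsto (fun n => d (n+1) / ((1-2*q) * d n) - 1) atTop
        (nhds (δ / ((1-2*q) * δ) - 1)) :=
      (hd1_tend.div hden_tend hdenne).sub tendsto_const_nhds
    have h2 : δ / ((1-2*q) * δ) - 1 = s := by
      rw [hs_def]
      field_simp
      ring
    rw [← h2]
    exact h1.congr (fun n => (hc_eq n).symm)
  -- identify δ
  have hrec_tend : Tendsto (fun n => (cseq q n)^2
      + ((1 - cseq q n)^2 - (1-2*q)^2*(d n)^2)/2) atTop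
      (nhds (s^2 + ((1 - s)^2 - (1-2*q)^2*δ^2)/2)) := by
    apply Tendsto.add (hc_tend.pow 2)
    apply Tendsto.div_const
    apply Tendsto.sub
    · exact (tendsto_const_nhds.sub hc_tend).pow 2
    · exact tendsto_const_nhds.mul (hd_tend.pow 2)
  have hshift : Tendsto (fun n => cseq q (n+1)) atTop (nhds s) :=
    hc_tend.comp (tendsto_add_atTop_nat 1)
  have heq : s = s^2 + ((1 - s)^2 - (1-2*q)^2*δ^2)/2 := by
    apply tendsto_nhds_unique hshift
    exact hrec_tend.congr (fun n => (rec_c2 q n).symm)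
  have hδsq : δ^2 = dlow^2 := by
    have hgs : (1-s)*(1-3*s)*(1-2*q)^2 = (1-4*q)*(1-8*q) := by
      rw [hs_def]; field_simp; ring
    have h1 : (1-2*q)^2*δ^2 = (1-s)*(1-3*s) := by linear_combination 2*heq
    have h2 : δ^2 * (1-2*q)^4 = dlow^2 * (1-2*q)^4 := by
      rw [hdlow_sq, div_mul_cancel₀ _ (by positivity : ((1:ℝ)-2*q)^4 ≠ 0)]
      linear_combination (1-2*q)^2 * h1 + hgs
    exact mul_right_cancel₀ (by positivity) h2
  have hδeq : δ = dlow := by nlinarith [hδsq, hδlb, hdlow0]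
  -- conclude
  have ha_eq : ∀ n, Palpha n q = (1 + d n - cseq q n)/2 := by
    intro n
    have h := sum_one q n
    have h2 : Palpha n q = aseq q n := Palpha_eq q n
    rw [h2, hd_def]
    linarith
  have hfinal : Tendsto (fun n => (1 + d n - cseq q n)/2) atTop
      (nhds ((1 + δ - s)/2)) :=
    ((tendsto_const_nhds.add hd_tend).sub hc_tend).div_const 2
  have : (1 + δ - s)/2 = (1/2) * (1 - 2*q/(1-2*q)
      + Real.sqrt ((1-8*q)*(1-4*q)) / (1-2*q)^2) := by
    rw [hδeq, hdlow_def, hs_def]; ring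
  rw [← this]
  exact hfinal.congr (fun n => (ha_eq n).symm)



end StmtAux

/-- For every fixed `q` with `0 < q < 1/8`, `P_α(n,q)` converges,
as `n → ∞`, to `(1/2)·(1 − 2q/(1−2q) + √((1−8q)(1−4q))/(1−2q)²)`. -/
theorem stmt1 (q : ℝ) (hq0 : 0 < q) (hq1 : q < 1/8) :
    Filter.Tendsto (fun n : ℕ => Palpha n q) Filter.atTop
      (nhds ((1/2) * (1 - 2*q/(1-2*q) + Real.sqrt ((1-8*q)*(1-4*q)) / (1-2*q)^2))) := by
  exact StmtAux.stmt1_aux q hq0 hq1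
end

section
/- Let p_z and p_y be real numbers with 0 < p_y < p_z < 1/2. Then there exists ε with 0 < ε < 1/8 such that for every q with 0 < q < ε and every integer n ≥ 2, the inequality (p_z − p_y)·P_α(n,q) > (1 − 2p_z)·P_{αβ}(n,q) + (1 − p_z − p_y)·P_β(n,q) holds. -/
lemma transProb_sum (p : ℝ) (s : Bool) : transProb p s true + transProb p s false = 1 := by
  cases s <;> simp [transProb]

lemma PTree.sum_charProb (t : PTree) (s : Bool) : ∑ c : t.Char, t.charProb s c = 1 := by
  induction t generalizing s with
  | leaf =>
      show ∑ c : Bool, _ = 1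
      cases s <;> simp [PTree.charProb]
  | node p₁ p₂ t₁ t₂ ih₁ ih₂ =>
      show ∑ c : t₁.Char × t₂.Char, ((∑ s₁ : Bool, transProb p₁ s s₁ * t₁.charProb s₁ c.1) *
        (∑ s₂ : Bool, transProb p₂ s s₂ * t₂.charProb s₂ c.2)) = 1
      rw [Fintype.sum_prod_type]
      dsimp only
      rw [← Finset.sum_mul_sum]
      have h1 : ∑ c : t₁.Char, ∑ s₁ : Bool, transProb p₁ s s₁ * t₁.charProb s₁ c = 1 := by
        rw [Finset.sum_comm]
        simp only [← Finset.mul_sum, ih₁, mul_one]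
        rw [Fintype.sum_bool]; exact transProb_sum p₁ s
      have h2 : ∑ c : t₂.Char, ∑ s₂ : Bool, transProb p₂ s s₂ * t₂.charProb s₂ c = 1 := by
        rw [Finset.sum_comm]
        simp only [← Finset.mul_sum, ih₂, mul_one]
        rw [Fintype.sum_bool]; exact transProb_sum p₂ s
      rw [h1, h2, one_mul]

lemma PTree.fitch_nonempty (t : PTree) (c : t.Char) : (t.fitch c).Nonempty := by
  induction t with
  | leaf => exact Finset.singleton_nonempty c
  | node p₁ p₂ t₁ t₂ ih₁ ih₂ =>
      show (if _ then _ else _ : Finset Bool).Nonempty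
      split
      · assumption
      · exact Finset.Nonempty.mono Finset.subset_union_left (ih₁ c.1)

lemma balanced_charProb_nonneg (q : ℝ) (h0 : 0 ≤ q) (h1 : q ≤ 1) :
    ∀ n (s : Bool) (c : (balanced q n).Char), 0 ≤ (balanced q n).charProb s c := by
  intro n
  induction n with
  | zero =>
      intro s c
      show (0:ℝ) ≤ if (show Bool from c) = s then 1 else 0
      split <;> norm_num
  | succ n ih =>
      intro s c
      show (0:ℝ) ≤ (∑ s₁ : Bool, transProb q s s₁ * _) * (∑ s₂ : Bool, transProb q s s₂ * _)
      have ht : ∀ s s' : Bool, 0 ≤ transProb q s s' := by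
        intro s s'; unfold transProb; split <;> linarith
      apply mul_nonneg <;>
        exact Finset.sum_nonneg fun s' _ => mul_nonneg (ht _ _) (ih _ _)

noncomputable def PS (t : PTree) (u : Finset Bool) (s : Bool) : ℝ :=
  ∑ c : t.Char, if t.fitch c = u then t.charProb s c else 0

lemma PS_empty (t : PTree) (s : Bool) : PS t ∅ s = 0 := by
  unfold PS
  apply Finset.sum_eq_zero
  intro c _
  rw [if_neg]
  intro h
  exact absurd h (Finset.nonempty_iff_ne_empty.mp (t.fitch_nonempty c))

lemma finsetBool_cases (u : Finset Bool) :
    u = ∅ ∨ u = {true} ∨ u = {false} ∨ u = ({true, false} : Finset Bool) := by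
  revert u; decide

lemma PS_partition (t : PTree) (s : Bool) :
    PS t {true} s + PS t {false} s + PS t ({true, false} : Finset Bool) s = 1 := by
  unfold PS
  rw [← Finset.sum_add_distrib, ← Finset.sum_add_distrib, ← t.sum_charProb s]
  apply Finset.sum_congr rfl
  intro c _
  rcases finsetBool_cases (t.fitch c) with h | h | h | h
  · exact absurd h (Finset.nonempty_iff_ne_empty.mp (t.fitch_nonempty c))
  all_goals rw [h]
  · have : ({true} : Finset Bool) ≠ {true, false} := by decide
    simp [this]
  · have : ({false} : Finset Bool) ≠ {true} := by decide
    have h2 : ({false} : Finset Bool) ≠ {true, false} := by decide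
    simp [this, h2]
  · have : ({true, false} : Finset Bool) ≠ {true} := by decide
    have h2 : ({true, false} : Finset Bool) ≠ {false} := by decide
    simp [this, h2]

lemma PS_nonneg (q : ℝ) (h0 : 0 ≤ q) (h1 : q ≤ 1) (n : ℕ) (u : Finset Bool) (s : Bool) :
    0 ≤ PS (balanced q n) u s := by
  apply Finset.sum_nonneg
  intro c _
  split
  · exact balanced_charProb_nonneg q h0 h1 n s c
  · exact le_refl _

lemma key_collapse (u v₁ v₂ : Finset Bool) (x y : ℝ) :
    (∑ u₁ : Finset Bool, ∑ u₂ : Finset Bool,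
      (if (if (u₁ ∩ u₂).Nonempty then u₁ ∩ u₂ else u₁ ∪ u₂) = u then (1:ℝ) else 0) *
      ((if v₁ = u₁ then x else 0) * (if v₂ = u₂ then y else 0)))
    = (if (if (v₁ ∩ v₂).Nonempty then v₁ ∩ v₂ else v₁ ∪ v₂) = u then (1:ℝ) else 0) * (x * y) := by
  simp only [mul_ite, ite_mul, mul_zero, zero_mul, Finset.sum_ite_eq, Finset.mem_univ, if_true]

lemma PS_node (p₁ p₂ : ℝ) (t₁ t₂ : PTree) (u : Finset Bool) (s : Bool) :
    PS (.node p₁ p₂ t₁ t₂) u s =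
      ∑ u₁ : Finset Bool, ∑ u₂ : Finset Bool,
        (if (if (u₁ ∩ u₂).Nonempty then u₁ ∩ u₂ else u₁ ∪ u₂) = u then (1:ℝ) else 0) *
        ((∑ s' : Bool, transProb p₁ s s' * PS t₁ u₁ s') *
         (∑ s' : Bool, transProb p₂ s s' * PS t₂ u₂ s')) := by
  have V_eq : ∀ (t : PTree) (p : ℝ) (v : Finset Bool),
      (∑ s' : Bool, transProb p s s' * PS t v s') =
      ∑ c : t.Char, if t.fitch c = v then (∑ s' : Bool, transProb p s s' * t.charProb s' c) else 0 := by
    intro t p v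
    unfold PS
    simp only [Finset.mul_sum]
    rw [Finset.sum_comm]
    exact Finset.sum_congr rfl fun c _ => by split <;> simp
  simp only [V_eq]
  have hrhs : ∀ u₁ u₂ : Finset Bool,
      (if (if (u₁ ∩ u₂).Nonempty then u₁ ∩ u₂ else u₁ ∪ u₂) = u then (1:ℝ) else 0) *
      ((∑ c : t₁.Char, if t₁.fitch c = u₁ then (∑ s' : Bool, transProb p₁ s s' * t₁.charProb s' c) else 0) *
       (∑ c : t₂.Char, if t₂.fitch c = u₂ then (∑ s' : Bool, transProb p₂ s s' * t₂.charProb s' c) else 0))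
      = ∑ c : t₁.Char × t₂.Char,
          (if (if (u₁ ∩ u₂).Nonempty then u₁ ∩ u₂ else u₁ ∪ u₂) = u then (1:ℝ) else 0) *
          ((if t₁.fitch c.1 = u₁ then (∑ s' : Bool, transProb p₁ s s' * t₁.charProb s' c.1) else 0) *
           (if t₂.fitch c.2 = u₂ then (∑ s' : Bool, transProb p₂ s s' * t₂.charProb s' c.2) else 0)) := by
    intro u₁ u₂
    rw [Fintype.sum_prod_type' (f := fun c₁ c₂ =>
      (if (if (u₁ ∩ u₂).Nonempty then u₁ ∩ u₂ else u₁ ∪ u₂) = u then (1:ℝ) else 0) *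
      ((if t₁.fitch c₁ = u₁ then (∑ s' : Bool, transProb p₁ s s' * t₁.charProb s' c₁) else 0) *
       (if t₂.fitch c₂ = u₂ then (∑ s' : Bool, transProb p₂ s s' * t₂.charProb s' c₂) else 0)))]
    rw [Finset.sum_mul_sum, Finset.mul_sum]
    exact Finset.sum_congr rfl fun c _ => by rw [Finset.mul_sum]
  simp only [hrhs]
  rw [← Fintype.sum_prod_type' (f := fun u₁ u₂ => ∑ c : t₁.Char × t₂.Char,
          (if (if (u₁ ∩ u₂).Nonempty then u₁ ∩ u₂ else u₁ ∪ u₂) = u then (1:ℝ) else 0) *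
          ((if t₁.fitch c.1 = u₁ then (∑ s' : Bool, transProb p₁ s s' * t₁.charProb s' c.1) else 0) *
           (if t₂.fitch c.2 = u₂ then (∑ s' : Bool, transProb p₂ s s' * t₂.charProb s' c.2) else 0)))]
  rw [Finset.sum_comm]
  unfold PS
  show (∑ c : t₁.Char × t₂.Char,
      if (PTree.node p₁ p₂ t₁ t₂).fitch c = u then (PTree.node p₁ p₂ t₁ t₂).charProb s c else 0) = _
  refine Finset.sum_congr rfl fun c _ => ?_
  rw [Fintype.sum_prod_type' (f := fun u₁ u₂ =>
          (if (if (u₁ ∩ u₂).Nonempty then u₁ ∩ u₂ else u₁ ∪ u₂) = u then (1:ℝ) else 0) *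
          ((if t₁.fitch c.1 = u₁ then (∑ s' : Bool, transProb p₁ s s' * t₁.charProb s' c.1) else 0) *
           (if t₂.fitch c.2 = u₂ then (∑ s' : Bool, transProb p₂ s s' * t₂.charProb s' c.2) else 0)))]
  rw [key_collapse]
  simp only [PTree.fitch, PTree.charProb]
  split <;> simp

lemma sum_finsetBool (f : Finset Bool → ℝ) :
    ∑ u : Finset Bool, f u = f ∅ + f {true} + f {false} + f {true, false} := by
  rw [show (Finset.univ : Finset (Finset Bool)) = {∅, {true}, {false}, {true, false}} from by decide]
  rw [Finset.sum_insert (by decide), Finset.sum_insert (by decide),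
      Finset.sum_insert (by decide), Finset.sum_singleton]
  ring

lemma PS_succ_true (q : ℝ) (n : ℕ) (s : Bool) :
    PS (balanced q (n+1)) {true} s =
      (transProb q s true * PS (balanced q n) {true} true
        + transProb q s false * PS (balanced q n) {true} false)^2
      + 2 * (transProb q s true * PS (balanced q n) {true} true
        + transProb q s false * PS (balanced q n) {true} false)
        * (transProb q s true * PS (balanced q n) ({true, false} : Finset Bool) true
        + transProb q s false * PS (balanced q n) ({true, false} : Finset Bool) false) := by
  show PS (.node q q (balanced q n) (balanced q n)) {true} s = _
  rw [PS_node]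
  rw [sum_finsetBool]
  simp only [sum_finsetBool, Fintype.sum_bool, PS_empty]
  simp (config := { decide := true }) only [if_true, if_false, zero_mul, mul_zero, one_mul, mul_one, add_zero, zero_add]
  ring

lemma PS_succ_false (q : ℝ) (n : ℕ) (s : Bool) :
    PS (balanced q (n+1)) {false} s =
      (transProb q s true * PS (balanced q n) {false} true
        + transProb q s false * PS (balanced q n) {false} false)^2
      + 2 * (transProb q s true * PS (balanced q n) {false} true
        + transProb q s false * PS (balanced q n) {false} false)
        * (transProb q s true * PS (balanced q n) ({true, false} : Finset Bool) true
        + transProb q s false * PS (balanced q n) ({true, false} : Finset Bool) false) := by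
  show PS (.node q q (balanced q n) (balanced q n)) {false} s = _
  rw [PS_node]
  rw [sum_finsetBool]
  simp only [sum_finsetBool, Fintype.sum_bool, PS_empty]
  simp (config := { decide := true }) only [if_true, if_false, zero_mul, mul_zero, one_mul, mul_one, add_zero, zero_add]
  ring

lemma PS_succ_both (q : ℝ) (n : ℕ) (s : Bool) :
    PS (balanced q (n+1)) ({true, false} : Finset Bool) s =
      (transProb q s true * PS (balanced q n) ({true, false} : Finset Bool) true
        + transProb q s false * PS (balanced q n) ({true, false} : Finset Bool) false)^2
      + 2 * (transProb q s true * PS (balanced q n) {true} true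
        + transProb q s false * PS (balanced q n) {true} false)
        * (transProb q s true * PS (balanced q n) {false} true
        + transProb q s false * PS (balanced q n) {false} false) := by
  show PS (.node q q (balanced q n) (balanced q n)) ({true, false} : Finset Bool) s = _
  rw [PS_node]
  rw [sum_finsetBool]
  simp only [sum_finsetBool, Fintype.sum_bool, PS_empty]
  simp (config := { decide := true }) only [if_true, if_false, zero_mul, mul_zero, one_mul, mul_one, add_zero, zero_add]
  ring

lemma PS_leaf (u : Finset Bool) (s : Bool) :
    PS (balanced q0 0) u s = if u = {s} then 1 else 0 := by
  show PS .leaf u s = _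
  unfold PS
  show (∑ c : Bool, if PTree.leaf.fitch c = u then PTree.leaf.charProb s c else 0) = _
  rw [Fintype.sum_bool]
  simp only [PTree.fitch, PTree.charProb]
  cases s <;> rcases finsetBool_cases u with h | h | h | h <;> subst h <;>
    simp (config := { decide := true }) only [if_true, if_false, add_zero, zero_add] <;> rfl

lemma PS_le_one (q : ℝ) (h0 : 0 ≤ q) (h1 : q ≤ 1) (n : ℕ) (s : Bool) :
    PS (balanced q n) {true} s ≤ 1 ∧ PS (balanced q n) {false} s ≤ 1 ∧
      PS (balanced q n) ({true, false} : Finset Bool) s ≤ 1 := by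
  have hp := PS_partition (balanced q n) s
  have n1 := PS_nonneg q h0 h1 n {true} s
  have n2 := PS_nonneg q h0 h1 n {false} s
  have n3 := PS_nonneg q h0 h1 n ({true, false} : Finset Bool) s
  refine ⟨by linarith, by linarith, by linarith⟩


lemma step1 (q x y : ℝ) (hq0 : 0 < q) (hq : q ≤ 1/41) (hx0 : 0 ≤ x) (hx : x ≤ q + 16*q^2)
    (hy0 : 0 ≤ y) (hy : y ≤ 3*q) : x^2 + 2*x*y ≤ 16*q^2 := by
  have h0 : (0:ℝ) ≤ q := hq0.le
  have hq2 : (0:ℝ) ≤ q + 16*q^2 := by positivity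
  have t1 : x*x ≤ (q + 16*q^2)*(q + 16*q^2) := mul_self_le_mul_self hx0 hx
  have t2 : x*y ≤ (q + 16*q^2)*(3*q) := mul_le_mul hx hy hy0 hq2
  have t3 : 0 ≤ (1/41 - q)*q^2 := mul_nonneg (by linarith) (sq_nonneg q)
  have t4 : 0 ≤ (1/41 - q)*q^3 := mul_nonneg (by linarith) (by positivity)
  nlinarith [t1, t2, t3, t4]

lemma step2 (q x y z : ℝ) (hq0 : 0 < q) (hq : q ≤ 1/41) (hx0 : 0 ≤ x) (hx : x ≤ 1)
    (hy0 : 0 ≤ y) (hy : y ≤ q + 16*q^2) (hz0 : 0 ≤ z) (hz : z ≤ 3*q) :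
    z^2 + 2*x*y ≤ 3*q := by
  have t1 : z*z ≤ (3*q)*(3*q) := mul_self_le_mul_self hz0 hz
  have t2 : x*y ≤ 1*(q + 16*q^2) := mul_le_mul hx hy hy0 zero_le_one
  have t3 : 0 ≤ (1/41 - q)*q := mul_nonneg (by linarith) hq0.le
  nlinarith [t1, t2, t3]

lemma step2' (q x y z : ℝ) (hq0 : 0 < q) (hq : q ≤ 1/41) (hx0 : 0 ≤ x) (hx : x ≤ q + 16*q^2)
    (hy0 : 0 ≤ y) (hy : y ≤ 1) (hz0 : 0 ≤ z) (hz : z ≤ 3*q) :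
    z^2 + 2*x*y ≤ 3*q := by
  linarith [step2 q y x z hq0 hq hy0 hy hx0 hx hz0 hz]

lemma bounds (q : ℝ) (hq0 : 0 < q) (hq : q ≤ 1/41) : ∀ n : ℕ,
    PS (balanced q (n+1)) {false} true ≤ 16*q^2 ∧
    PS (balanced q (n+1)) ({true, false} : Finset Bool) true ≤ 3*q ∧
    PS (balanced q (n+1)) {true} false ≤ 16*q^2 ∧
    PS (balanced q (n+1)) ({true, false} : Finset Bool) false ≤ 3*q := by
  have h0 : (0:ℝ) ≤ q := le_of_lt hq0
  have h1 : q ≤ 1 := by linarith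
  have htt : transProb q true true = 1 - q := by simp [transProb]
  have htf : transProb q true false = q := by simp [transProb]
  have hft : transProb q false true = q := by simp [transProb]
  have hff : transProb q false false = 1 - q := by simp [transProb]
  intro n
  induction n with
  | zero =>
      rw [PS_succ_false q 0 true, PS_succ_true q 0 false,
          PS_succ_both q 0 true, PS_succ_both q 0 false]
      simp only [PS_leaf, htt, htf, hft, hff]
      simp (config := { decide := true }) only [if_true, if_false, mul_zero, mul_one, add_zero, zero_add]
      refine ⟨by nlinarith, by nlinarith, by nlinarith, by nlinarith⟩
  | succ n ih =>
      obtain ⟨hb, hc, haF, hcF⟩ := ih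
      obtain ⟨ha1, hb1, hc1⟩ := PS_le_one q h0 h1 (n+1) true
      obtain ⟨haF1, hbF1, hcF1⟩ := PS_le_one q h0 h1 (n+1) false
      have na := PS_nonneg q h0 h1 (n+1) {true} true
      have nb := PS_nonneg q h0 h1 (n+1) {false} true
      have nc := PS_nonneg q h0 h1 (n+1) ({true, false} : Finset Bool) true
      have naF := PS_nonneg q h0 h1 (n+1) {true} false
      have nbF := PS_nonneg q h0 h1 (n+1) {false} false
      have ncF := PS_nonneg q h0 h1 (n+1) ({true, false} : Finset Bool) false
      rw [PS_succ_false q (n+1) true, PS_succ_true q (n+1) false,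
          PS_succ_both q (n+1) true, PS_succ_both q (n+1) false]
      simp only [htt, htf, hft, hff]
      set a := PS (balanced q (n+1)) {true} true
      set b := PS (balanced q (n+1)) {false} true
      set c := PS (balanced q (n+1)) ({true, false} : Finset Bool) true
      set aF := PS (balanced q (n+1)) {true} false
      set bF := PS (balanced q (n+1)) {false} false
      set cF := PS (balanced q (n+1)) ({true, false} : Finset Bool) false
      have h1q : (0:ℝ) ≤ 1 - q := by linarith
      have hB : (1-q)*b + q*bF ≤ q + 16*q^2 := by
        linarith [mul_nonneg h0 nb, mul_nonneg h0 (by linarith : (0:ℝ) ≤ 1 - bF)]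
      have hBn : 0 ≤ (1-q)*b + q*bF := by
        have := mul_nonneg h1q nb; have := mul_nonneg h0 nbF; linarith
      have hC : (1-q)*c + q*cF ≤ 3*q := by
        linarith [mul_nonneg h1q (by linarith : (0:ℝ) ≤ 3*q - c), mul_nonneg h0 (by linarith : (0:ℝ) ≤ 3*q - cF)]
      have hCn : 0 ≤ (1-q)*c + q*cF := by
        have := mul_nonneg h1q nc; have := mul_nonneg h0 ncF; linarith
      have hA : (1-q)*a + q*aF ≤ 1 := by
        linarith [mul_nonneg h1q (by linarith : (0:ℝ) ≤ 1 - a), mul_nonneg h0 (by linarith : (0:ℝ) ≤ 1 - aF)]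
      have hAn : 0 ≤ (1-q)*a + q*aF := by
        have := mul_nonneg h1q na; have := mul_nonneg h0 naF; linarith
      have hAF : q*a + (1-q)*aF ≤ q + 16*q^2 := by
        linarith [mul_nonneg h0 naF, mul_nonneg h0 (by linarith : (0:ℝ) ≤ 1 - a)]
      have hAFn : 0 ≤ q*a + (1-q)*aF := by
        have := mul_nonneg h1q naF; have := mul_nonneg h0 na; linarith
      have hCF : q*c + (1-q)*cF ≤ 3*q := by
        linarith [mul_nonneg h1q (by linarith : (0:ℝ) ≤ 3*q - cF), mul_nonneg h0 (by linarith : (0:ℝ) ≤ 3*q - c)]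
      have hCFn : 0 ≤ q*c + (1-q)*cF := by
        have := mul_nonneg h1q ncF; have := mul_nonneg h0 nc; linarith
      have hBF : q*b + (1-q)*bF ≤ 1 := by
        linarith [mul_nonneg h1q (by linarith : (0:ℝ) ≤ 1 - bF), mul_nonneg h0 (by linarith : (0:ℝ) ≤ 1 - b)]
      have hBFn : 0 ≤ q*b + (1-q)*bF := by
        have := mul_nonneg h1q nbF; have := mul_nonneg h0 nb; linarith
      exact ⟨step1 q _ _ hq0 hq hBn hB hCn hC,
        step2 q _ _ _ hq0 hq hAn hA hBn hB hCn hC,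
        step1 q _ _ hq0 hq hAFn hAF hCFn hCF,
        step2' q _ _ _ hq0 hq hAFn hAF hBFn hBF hCFn hCF⟩

/-- for `0 < p_y < p_z < 1/2` there is `ε` with `0 < ε < 1/8`
such that for all `0 < q < ε` and all integers `n ≥ 2`,
`(p_z − p_y)·P_α(n,q) > (1 − 2p_z)·P_{αβ}(n,q) + (1 − p_z − p_y)·P_β(n,q)`. -/
theorem stmt13 (pz py : ℝ) (h0 : 0 < py) (h1 : py < pz) (h2 : pz < 1/2) :
    ∃ ε : ℝ, 0 < ε ∧ ε < 1/8 ∧ ∀ q : ℝ, 0 < q → q < ε → ∀ n : ℕ, 2 ≤ n →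
      (pz - py) * Palpha n q >
        (1 - 2*pz) * Palphabeta n q + (1 - pz - py) * Pbeta n q := by
  refine ⟨min ((pz - py)/41) (1/41), lt_min (by linarith) (by norm_num), ?_, ?_⟩
  · calc min ((pz - py)/41) (1/41) ≤ 1/41 := min_le_right _ _
      _ < 1/8 := by norm_num
  · intro q hq0 hqe n hn
    have hqd : q < (pz - py)/41 := lt_of_lt_of_le hqe (min_le_left _ _)
    have hq41 : q < 1/41 := lt_of_lt_of_le hqe (min_le_right _ _)
    obtain ⟨k, rfl⟩ : ∃ k, n = k + 1 := ⟨n - 1, by omega⟩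
    obtain ⟨hb, hc, -, -⟩ := bounds q hq0 (le_of_lt hq41) k
    have hpart := PS_partition (balanced q (k+1)) true
    have nb := PS_nonneg q hq0.le (by linarith) (k+1) {false} true
    have nc := PS_nonneg q hq0.le (by linarith) (k+1) ({true, false} : Finset Bool) true
    have e1 : Palpha (k+1) q = PS (balanced q (k+1)) {true} true := rfl
    have e2 : Pbeta (k+1) q = PS (balanced q (k+1)) {false} true := rfl
    have e3 : Palphabeta (k+1) q = PS (balanced q (k+1)) ({true, false} : Finset Bool) true := rfl
    have ha : PS (balanced q (k+1)) {true} true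
        = 1 - PS (balanced q (k+1)) {false} true
          - PS (balanced q (k+1)) ({true, false} : Finset Bool) true := by linarith
    rw [e1, e2, e3, ha]
    linarith [mul_nonneg nb (show (0:ℝ) ≤ 1 - (pz - py) by linarith),
      mul_nonneg nc (show (0:ℝ) ≤ 1 - (pz - py) by linarith),
      mul_nonneg (show (0:ℝ) ≤ 1/41 - q by linarith) hq0.le,
      mul_nonneg (show (0:ℝ) ≤ 2*pz by linarith) nc,
      mul_nonneg (show (0:ℝ) ≤ pz + py by linarith) nb]
end
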